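/- Suppose the mechanism (q, Π) satisfies incentive compatibility, Π is continuous with Π′(c) = −q(c) almost everywhere, and the no-subsidy constraint q(c)(P(q(c)) − c) − k·1_{q(c)>0} ≥ Π(c) holds. If q is nonincreasing then there exists a cutoff c̄ ∈ (0, c̄_LF] such that q(c) = 0 for c > c̄ and q(c) > 0 for c < c̄; moreover c̄ ≤ c̄_LF where c̄_LF is defined by max_q q(P(q) − c̄_LF) = k. -/
import Mathlib


open Set

/-- Suppose the mechanism `(q, Π)` satisfies incentive
compatibility (`q` nonincreasing and `Π c = ∫_c^1 q`), and the no-subsidy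
constraint `q c * (P (q c) - c) - k ≥ Π c` whenever `q c > 0`.  If `q` is
nonincreasing (and not identically zero, since the all-zero policy is dominated
by the feasible laissez-faire policy), then there exists a cutoff
`c̄ ∈ (0, c̄_LF]` such that `q c = 0` for `c > c̄` and `q c > 0` for `c < c̄`.
Here `c̄_LF` is the laissez-faire exclusion cutoff, defined by
`max_q q * (P q - c̄_LF) = k`, so that for `c > c̄_LF` every positive quantity
earns strictly less than the fixed cost `k`. -/
theorem stmt_8 (qmax k cbarLF : ℝ) (P q Pi : ℝ → ℝ)
    (hqmax : 0 < qmax) (hk : 0 ≤ k)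
    (hmono : AntitoneOn q (Icc 0 1))
    (hrange : ∀ c ∈ Icc (0:ℝ) 1, q c ∈ Icc (0:ℝ) qmax)
    (hnz : ∃ c ∈ Ioo (0:ℝ) 1, 0 < q c)
    (hPi : ∀ c ∈ Icc (0:ℝ) 1, Pi c = ∫ x in c..1, q x)
    (hNS : ∀ c ∈ Icc (0:ℝ) 1, 0 < q c → Pi c ≤ q c * (P (q c) - c) - k)
    (hLF : ∀ c ∈ Icc (0:ℝ) 1, cbarLF < c →
      ∀ q' ∈ Icc (0:ℝ) qmax, 0 < q' → q' * (P q' - c) < k) :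
    ∃ cbar : ℝ, 0 < cbar ∧ cbar ≤ cbarLF ∧
      (∀ c ∈ Icc (0:ℝ) 1, cbar < c → q c = 0) ∧
      (∀ c ∈ Icc (0:ℝ) 1, c < cbar → 0 < q c) := by
  -- First: Pi is nonnegative on Icc 0 1
  have hPinn : ∀ c ∈ Icc (0:ℝ) 1, 0 ≤ Pi c := by
    intro c hc
    rw [hPi c hc]
    have hint : IntervalIntegrable q MeasureTheory.volume c 1 := by
      apply AntitoneOn.intervalIntegrable
      apply hmono.mono
      rw [uIcc_of_le hc.2]
      exact Icc_subset_Icc hc.1 le_rfl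
    apply intervalIntegral.integral_nonneg hc.2
    intro x hx
    exact (hrange x ⟨le_trans hc.1 hx.1, hx.2⟩).1
  -- Key: positive quantity implies c ≤ cbarLF
  have hkey : ∀ c ∈ Icc (0:ℝ) 1, 0 < q c → c ≤ cbarLF := by
    intro c hc hq
    by_contra h
    push_neg at h
    have h1 := hNS c hc hq
    have h2 := hLF c hc h (q c) (hrange c hc) hq
    have h3 := hPinn c hc
    linarith
  obtain ⟨c0, hc0, hq0⟩ := hnz
  have hc0' : c0 ∈ Icc (0:ℝ) 1 := ⟨hc0.1.le, hc0.2.le⟩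
  set S : Set ℝ := {c | c ∈ Icc (0:ℝ) 1 ∧ 0 < q c} with hS
  have hne : S.Nonempty := ⟨c0, hc0', hq0⟩
  have hbdd : BddAbove S := ⟨1, fun x hx => hx.1.2⟩
  refine ⟨sSup S, lt_of_lt_of_le hc0.1 (le_csSup hbdd ⟨hc0', hq0⟩), ?_, ?_, ?_⟩
  · exact csSup_le hne fun x hx => hkey x hx.1 hx.2
  · intro c hc hlt
    have h0 : 0 ≤ q c := (hrange c hc).1
    rcases h0.lt_or_eq with h | h
    · exact absurd (le_csSup hbdd (⟨hc, h⟩ : c ∈ S)) (not_le.mpr hlt)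
    · exact h.symm
  · intro c hc hlt
    obtain ⟨s, hs, hcs⟩ := exists_lt_of_lt_csSup hne hlt
    exact lt_of_lt_of_le hs.2 (hmono hc hs.1 hcs.le)
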